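/- For all real numbers w_1, w_2 with 63/100 ≤ w_1 ≤ 1, 7/20 ≤ w_2 ≤ 63/100 and 63/100 ≤ w_1 + w_2 ≤ 1, one has 3·(100·w_2 − 63)·(−2·w_1 − w_2 + 2)/140 ≤ −1443/7000, with the maximum attained at (w_1, w_2) = (63/100, 37/100). -/
import Mathlib

/-- appendix case `I₃ × I₂ × I₃`, `x = (1,1,1)`: the expression
is at most `−1443/7000` on the region, with the maximum attained at
`(w₁, w₂) = (63/100, 37/100)`. -/
theorem appendix_I3_I2_I3_111 :
    (∀ w1 w2 : ℝ, 63/100 ≤ w1 → w1 ≤ 1 → 7/20 ≤ w2 → w2 ≤ 63/100 →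
      63/100 ≤ w1 + w2 → w1 + w2 ≤ 1 →
      3 * (100 * w2 - 63) * (-2 * w1 - w2 + 2) / 140 ≤ -1443/7000) ∧
    3 * (100 * (37/100:ℝ) - 63) * (-2 * (63/100) - 37/100 + 2) / 140
      = -1443/7000 := by
  constructor
  · intro w1 w2 h1 h2 h3 h4 h5 h6
    nlinarith [mul_nonneg (sub_nonneg.2 h1) (sub_nonneg.2 h4),
      mul_nonneg (sub_nonneg.2 h6) (sub_nonneg.2 h4),
      mul_nonneg (sub_nonneg.2 h1) (sub_nonneg.2 h6),
      mul_nonneg (sub_nonneg.2 h3) (sub_nonneg.2 h6),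
      sq_nonneg (w1 - 63/100), sq_nonneg (w1 + w2 - 1)]
  · norm_num
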